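/- The matrices [[1,2],[0,1]] and [[1,0],[2,1]] generate a free subgroup of rank 2 in SL(2,ℤ). -/

import Mathlib

/-- The matrix `[[1, 2], [0, 1]]` in `SL(2, ℤ)`. -/
def A : Matrix.SpecialLinearGroup (Fin 2) ℤ := ⟨!![1, 2; 0, 1], by decide⟩

/-- The matrix `[[1, 0], [2, 1]]` in `SL(2, ℤ)`. -/
def B : Matrix.SpecialLinearGroup (Fin 2) ℤ := ⟨!![1, 0; 2, 1], by decide⟩

namespace PingPongAux

abbrev SL2Z := Matrix.SpecialLinearGroup (Fin 2) ℤ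

/-- Nonzero integer vectors. -/
def V : Type := {v : Fin 2 → ℤ // v ≠ 0}

noncomputable instance : MulAction SL2Z V where
  smul g v := ⟨(g : Matrix (Fin 2) (Fin 2) ℤ).mulVec v.1, by
    intro h
    apply v.2
    have h2 := congrArg (((g⁻¹ : SL2Z) : Matrix (Fin 2) (Fin 2) ℤ).mulVec) h
    rw [Matrix.mulVec_mulVec, ← Matrix.SpecialLinearGroup.coe_mul, inv_mul_cancel,
      Matrix.SpecialLinearGroup.coe_one, Matrix.one_mulVec, Matrix.mulVec_zero] at h2
    exact h2⟩
  one_smul v := Subtype.ext (by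
    show ((1 : SL2Z) : Matrix (Fin 2) (Fin 2) ℤ).mulVec v.1 = v.1
    rw [Matrix.SpecialLinearGroup.coe_one, Matrix.one_mulVec])
  mul_smul g h v := Subtype.ext (by
    show ((g * h : SL2Z) : Matrix (Fin 2) (Fin 2) ℤ).mulVec v.1
        = (g : Matrix (Fin 2) (Fin 2) ℤ).mulVec ((h : Matrix (Fin 2) (Fin 2) ℤ).mulVec v.1)
    rw [Matrix.SpecialLinearGroup.coe_mul, Matrix.mulVec_mulVec])

lemma smul_coe (g : SL2Z) (v : V) :
    (g • v).1 = (g : Matrix (Fin 2) (Fin 2) ℤ).mulVec v.1 := rfl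

lemma V_ne (v : V) : v.1 0 ≠ 0 ∨ v.1 1 ≠ 0 := by
  by_contra h
  push_neg at h
  apply v.2
  funext i
  fin_cases i
  · simpa using h.1
  · simpa using h.2

lemma A_smul (v : V) : (A • v).1 0 = v.1 0 + 2 * v.1 1 ∧ (A • v).1 1 = v.1 1 := by
  rw [smul_coe]
  constructor <;>
    simp [A, Matrix.mulVec, dotProduct, Fin.sum_univ_two] <;> ring

lemma B_smul (v : V) : (B • v).1 0 = v.1 0 ∧ (B • v).1 1 = 2 * v.1 0 + v.1 1 := by
  rw [smul_coe]
  constructor <;>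
    simp [B, Matrix.mulVec, dotProduct, Fin.sum_univ_two] <;> ring

lemma A_inv : A⁻¹ = (⟨!![1, -2; 0, 1], by decide⟩ : SL2Z) := by
  rw [Matrix.SpecialLinearGroup.SL2_inv_expl]
  ext i j
  fin_cases i <;> fin_cases j <;> simp [A]

lemma B_inv : B⁻¹ = (⟨!![1, 0; -2, 1], by decide⟩ : SL2Z) := by
  rw [Matrix.SpecialLinearGroup.SL2_inv_expl]
  ext i j
  fin_cases i <;> fin_cases j <;> simp [B]

lemma A_inv_smul (v : V) :
    (A⁻¹ • v).1 0 = v.1 0 - 2 * v.1 1 ∧ (A⁻¹ • v).1 1 = v.1 1 := by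
  rw [A_inv]; erw [smul_coe]
  constructor <;>
    simp [Matrix.mulVec, dotProduct, Fin.sum_univ_two] <;> ring

lemma B_inv_smul (v : V) :
    (B⁻¹ • v).1 0 = v.1 0 ∧ (B⁻¹ • v).1 1 = v.1 1 - 2 * v.1 0 := by
  rw [B_inv]; erw [smul_coe]
  constructor <;>
    simp [Matrix.mulVec, dotProduct, Fin.sum_univ_two] <;> ring

/-- Ping-pong sets. -/
def XA : Set V := {v | (v.1 1 > 0 ∧ v.1 0 > v.1 1) ∨ (v.1 1 < 0 ∧ v.1 0 < v.1 1) ∨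
  (v.1 1 = 0 ∧ v.1 0 > 0)}

def YA : Set V := {v | (v.1 1 > 0 ∧ v.1 0 ≤ -v.1 1) ∨ (v.1 1 < 0 ∧ v.1 0 ≥ -v.1 1) ∨
  (v.1 1 = 0 ∧ v.1 0 < 0)}

def XB : Set V := {v | (v.1 0 > 0 ∧ v.1 1 ≥ v.1 0) ∨ (v.1 0 < 0 ∧ v.1 1 ≤ v.1 0) ∨
  (v.1 0 = 0 ∧ v.1 1 > 0)}

def YB : Set V := {v | (v.1 0 > 0 ∧ v.1 1 < -v.1 0) ∨ (v.1 0 < 0 ∧ v.1 1 > -v.1 0) ∨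
  (v.1 0 = 0 ∧ v.1 1 < 0)}

end PingPongAux

open PingPongAux in
/-- The matrices `[[1,2],[0,1]]` and `[[1,0],[2,1]]` generate a free subgroup of rank 2
in `SL(2, ℤ)`: the homomorphism from the free group of rank 2 sending the two
generators to these matrices is injective. -/
theorem free_subgroup_SL2Z :
    Function.Injective (FreeGroup.lift (fun b : Bool => if b then A else B)) := by
  classical
  let X : Bool → Set V := fun b => if b then XA else XB
  let Y : Bool → Set V := fun b => if b then YA else YB
  apply FreeGroup.injective_lift_of_ping_pong (fun b : Bool => if b then A else B) X Y
  · -- nonempty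
    intro i
    cases i
    · exact ⟨⟨![0, 1], by intro h; simpa using congrFun h 1⟩, Or.inr (Or.inr ⟨rfl, by norm_num⟩)⟩
    · exact ⟨⟨![1, 0], by intro h; simpa using congrFun h 0⟩, Or.inr (Or.inr ⟨rfl, by norm_num⟩)⟩
  · -- X pairwise disjoint
    intro i j hij
    have : ∀ v : V, v ∈ XA → v ∉ XB := by
      rintro v h1 h2
      simp only [XA, XB, Set.mem_setOf_eq] at h1 h2
      omega
    cases i <;> cases j <;> simp_all [Function.onFun, X] <;>
      rw [Set.disjoint_left] <;> intro v hv hv'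
    · exact this v hv' hv
    · exact this v hv hv'
  · -- Y pairwise disjoint
    intro i j hij
    have : ∀ v : V, v ∈ YA → v ∉ YB := by
      rintro v h1 h2
      simp only [YA, YB, Set.mem_setOf_eq] at h1 h2
      omega
    cases i <;> cases j <;> simp_all [Function.onFun, Y] <;>
      rw [Set.disjoint_left] <;> intro v hv hv'
    · exact this v hv' hv
    · exact this v hv hv'
  · -- X i disjoint Y j
    intro i j
    have hAA : ∀ v : V, v ∈ XA → v ∉ YA := by
      rintro v h1 h2; simp only [XA, YA, Set.mem_setOf_eq] at h1 h2; omega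
    have hAB : ∀ v : V, v ∈ XA → v ∉ YB := by
      rintro v h1 h2; simp only [XA, YB, Set.mem_setOf_eq] at h1 h2; omega
    have hBA : ∀ v : V, v ∈ XB → v ∉ YA := by
      rintro v h1 h2; simp only [XB, YA, Set.mem_setOf_eq] at h1 h2; omega
    have hBB : ∀ v : V, v ∈ XB → v ∉ YB := by
      rintro v h1 h2; simp only [XB, YB, Set.mem_setOf_eq] at h1 h2; omega
    cases i <;> cases j <;> simp only [X, Y, if_true, if_false, Bool.false_eq_true] <;>
      rw [Set.disjoint_left] <;> intro v hv
    · exact hBB v hv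
    · exact hBA v hv
    · exact hAB v hv
    · exact hAA v hv
  · -- a i • (Y i)ᶜ ⊆ X i
    intro i x hx
    obtain ⟨v, hv, rfl⟩ := hx
    cases i <;> simp only [X, Y, if_true, if_false, Bool.false_eq_true,
      Set.mem_compl_iff] at hv ⊢
    · -- B case
      obtain ⟨h0, h1⟩ := B_smul v
      have hne := V_ne v
      simp only [YB, Set.mem_setOf_eq] at hv
      simp only [XB, Set.mem_setOf_eq, h0, h1]
      omega
    · -- A case
      obtain ⟨h0, h1⟩ := A_smul v
      have hne := V_ne v
      simp only [YA, Set.mem_setOf_eq] at hv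
      simp only [XA, Set.mem_setOf_eq, h0, h1]
      omega
  · -- a⁻¹ i • (X i)ᶜ ⊆ Y i
    intro i x hx
    obtain ⟨v, hv, rfl⟩ := hx
    cases i <;> simp only [X, Y, Pi.inv_apply, if_true, if_false, Bool.false_eq_true,
      Set.mem_compl_iff] at hv ⊢
    · -- B case
      obtain ⟨h0, h1⟩ := B_inv_smul v
      have hne := V_ne v
      simp only [XB, Set.mem_setOf_eq] at hv
      simp only [YB, Set.mem_setOf_eq, h0, h1]
      omega
    · -- A case
      obtain ⟨h0, h1⟩ := A_inv_smul v
      have hne := V_ne v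
      simp only [XA, Set.mem_setOf_eq] at hv
      simp only [YA, Set.mem_setOf_eq, h0, h1]
      omega
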